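/- Let a, b, c > 0 be real numbers and let H be the 3×3 real symmetric matrix with zero diagonal and off-diagonal entries H₁₂ = H₂₁ = a, H₁₃ = H₃₁ = b, H₂₃ = H₃₂ = c. Then H has exactly one strictly positive eigenvalue, counted with multiplicity: exactly one of its three eigenvalues is > 0 and the other two are ≤ 0. -/

import Mathlib

open Matrix Finset

private lemma fin3_cards (f : Fin 3 → ℝ) (hsum : f 0 + f 1 + f 2 = 0)
    (hprod : 0 < f 0 * f 1 * f 2) :
    (Finset.univ.filter fun j => 0 < f j).card = 1 ∧
      (Finset.univ.filter fun j => f j ≤ 0).card = 2 := by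
  have key : ∀ (p : Fin 3 → Prop) (_ : DecidablePred p),
      (Finset.univ.filter p).card
        = (if p 0 then 1 else 0) + (if p 1 then 1 else 0) + (if p 2 then 1 else 0) := by
    intro p hp
    rw [Finset.card_filter, Fin.sum_univ_three]
  have hn0 : f 0 ≠ 0 := by intro h; simp [h] at hprod
  have hn1 : f 1 ≠ 0 := by intro h; simp [h] at hprod
  have hn2 : f 2 ≠ 0 := by intro h; simp [h] at hprod
  rcases hn0.lt_or_gt with h0 | h0
  · rcases hn1.lt_or_gt with h1 | h1
    · rcases hn2.lt_or_gt with h2 | h2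
      · exfalso; linarith
      · refine ⟨?_, ?_⟩
        · rw [key _ _, if_neg (not_lt.2 h0.le), if_neg (not_lt.2 h1.le), if_pos h2]
        · rw [key _ _, if_pos h0.le, if_pos h1.le, if_neg (not_le.2 h2)]
    · rcases hn2.lt_or_gt with h2 | h2
      · refine ⟨?_, ?_⟩
        · rw [key _ _, if_neg (not_lt.2 h0.le), if_pos h1, if_neg (not_lt.2 h2.le)]
        · rw [key _ _, if_pos h0.le, if_neg (not_le.2 h1), if_pos h2.le]
      · exfalso; nlinarith [mul_pos h1 h2]
  · rcases hn1.lt_or_gt with h1 | h1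
    · rcases hn2.lt_or_gt with h2 | h2
      · refine ⟨?_, ?_⟩
        · rw [key _ _, if_pos h0, if_neg (not_lt.2 h1.le), if_neg (not_lt.2 h2.le)]
        · rw [key _ _, if_neg (not_le.2 h0), if_pos h1.le, if_pos h2.le]
      · exfalso; nlinarith [mul_pos h0 h2]
    · rcases hn2.lt_or_gt with h2 | h2
      · exfalso; nlinarith [mul_pos h0 h1]
      · exfalso; linarith

theorem hollow_symmetric_3x3_one_positive_eigenvalue
    (a b c : ℝ) (ha : 0 < a) (hb : 0 < b) (hc : 0 < c)
    (H : Matrix (Fin 3) (Fin 3) ℝ)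
    (hHdef : H = !![0, a, b; a, 0, c; b, c, 0])
    (hH : H.IsHermitian) :
    (Finset.univ.filter fun j => 0 < hH.eigenvalues j).card = 1 ∧
      (Finset.univ.filter fun j => hH.eigenvalues j ≤ 0).card = 2 := by
  set f := hH.eigenvalues with hf
  have hdet : H.det = f 0 * f 1 * f 2 := by
    rw [hH.det_eq_prod_eigenvalues, Fin.prod_univ_three]
    norm_num
    rfl
  have hdet' : H.det = 2 * a * b * c := by
    subst hHdef
    simp [Matrix.det_fin_three]
    ring
  have htr : H.trace = f 0 + f 1 + f 2 := by
    conv_lhs => rw [hH.spectral_theorem]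
    rw [Unitary.conjStarAlgAut_apply, Matrix.trace_mul_cycle, (Matrix.mem_unitaryGroup_iff').mp
      (Matrix.IsHermitian.eigenvectorUnitary hH).2, Matrix.one_mul, Matrix.trace_diagonal,
      Fin.sum_univ_three]
    rfl
  have htr' : H.trace = 0 := by
    subst hHdef
    simp [Matrix.trace_fin_three]
  exact fin3_cards f (by linarith [htr.symm.trans htr'])
    (by nlinarith [hdet.symm.trans hdet', mul_pos (mul_pos ha hb) hc])
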